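/- Let $a : \mathbb{N} \to \mathbb{R}$ with $a_j > 0$ for all $j$, and $b : \mathbb{N} \to \mathbb{R}$ with $|b_j| \le C$ for all $j$ and some constant $C$. Assume there exists $j_0 \ge 1$ such that $a_{j-1} a_{j+1} \le a_j^2$ for all $j \ge j_0$, and assume $\sum_{j=0}^{\infty} 1/a_j < \infty$. Let $L$ be the densely defined operator on $\ell^2(\mathbb{N};\mathbb{C})$ whose domain is the set of finitely supported sequences and which acts by $(Lu)_j = a_{j-1} u_{j-1} + b_j u_j + a_j u_{j+1}$ (with the convention $a_{-1} u_{-1} = 0$). Then $L$ is not essentially self-adjoint; that is, the closure of $L$ is not a self-adjoint operator. -/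

import Mathlib

noncomputable section

/-- The Hilbert space `ℓ²(ℕ; ℂ)`. -/
abbrev H1 : Type := lp (fun _ : ℕ => ℂ) 2

open scoped BigOperators ENNReal NNReal


/-- two-step recursion data for the eigenvector. -/
noncomputable def jacSeq (a b : ℕ → ℝ) : ℕ → ℂ × ℂ
  | 0 => (1, (Complex.I - (b 0 : ℂ)) / (a 0 : ℂ))
  | n+1 => ((jacSeq a b n).2,
      ((Complex.I - (b (n+1) : ℂ)) * (jacSeq a b n).2 - (a n : ℂ) * (jacSeq a b n).1)
        / (a (n+1) : ℂ))

noncomputable def jacSol (a b : ℕ → ℝ) (n : ℕ) : ℂ := (jacSeq a b n).1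

lemma jacSol_zero (a b : ℕ → ℝ) : jacSol a b 0 = 1 := rfl

lemma jacSol_one (a b : ℕ → ℝ) : jacSol a b 1 = (Complex.I - (b 0 : ℂ)) / (a 0 : ℂ) := rfl

lemma jacSol_succ_succ (a b : ℕ → ℝ) (n : ℕ) :
    jacSol a b (n+2) =
      ((Complex.I - (b (n+1) : ℂ)) * jacSol a b (n+1) - (a n : ℂ) * jacSol a b n)
        / (a (n+1) : ℂ) := by
  simp [jacSol, jacSeq]

lemma jacSol_eigen (a b : ℕ → ℝ) (ha : ∀ j, 0 < a j) (j : ℕ) :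
    (if j = 0 then (0:ℂ) else (a (j-1) : ℂ) * jacSol a b (j-1))
      + (b j : ℂ) * jacSol a b j + (a j : ℂ) * jacSol a b (j+1)
      = Complex.I * jacSol a b j := by
  have haj : ∀ k, ((a k : ℝ) : ℂ) ≠ 0 := fun k => by exact_mod_cast (ha k).ne'
  cases j with
  | zero =>
    simp only [if_pos rfl, jacSol_zero]
    rw [show (0:ℕ)+1 = 1 from rfl, jacSol_one]
    field_simp [haj]
    simp only [↓reduceIte]
    ring
  | succ k =>
    simp only [Nat.succ_ne_zero, if_false, Nat.succ_sub_one]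
    rw [jacSol_succ_succ]
    field_simp [haj]
    ring

lemma jacSol_memℓp (a b : ℕ → ℝ) (ha : ∀ j, 0 < a j) {C : ℝ} (hC : ∀ j, |b j| ≤ C)
    {m₀ : ℕ} (hlc : ∀ j, m₀ + 1 ≤ j → a (j-1) * a (j+1) ≤ (a j)^2)
    (hsum : Summable (fun j => 1 / a j)) :
    Memℓp (jacSol a b) 2 := by
  set x := jacSol a b with hxdef
  have hC0 : 0 ≤ C := le_trans (abs_nonneg _) (hC 0)
  set K := 1 + C with hKdef
  have hK1 : (1:ℝ) ≤ K := by simp [hKdef]; linarith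
  have hIb : ∀ j, ‖Complex.I - (b j : ℂ)‖ ≤ K := by
    intro j
    calc ‖Complex.I - (b j : ℂ)‖ ≤ ‖Complex.I‖ + ‖(b j : ℂ)‖ := norm_sub_le _ _
      _ = 1 + |b j| := by
          rw [Complex.norm_I, Complex.norm_real, Real.norm_eq_abs]
      _ ≤ K := by rw [hKdef]; linarith [hC j]
  set R := a (m₀+1) / a m₀ with hRdef
  have hR0 : 0 ≤ R := by
    rw [hRdef]; exact div_nonneg (ha _).le (ha _).le
  -- ratio bound (log-concavity ⇒ ratios decreasing)
  have hrat : ∀ k, a (m₀ + 1 + k) * a m₀ ≤ a (m₀ + 1) * a (m₀ + k) := by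
    intro k
    induction k with
    | zero => simp [mul_comm]
    | succ k ih =>
      have h1 : a (m₀ + k) * a (m₀ + k + 2) ≤ a (m₀ + k + 1) ^ 2 := by
        have := hlc (m₀ + 1 + k) (by omega)
        simpa [show m₀ + 1 + k - 1 = m₀ + k from by omega,
          show m₀ + 1 + k + 1 = m₀ + k + 2 from by omega,
          show m₀ + 1 + k = m₀ + k + 1 from by omega] using this
      have ih' : a (m₀ + k + 1) * a m₀ ≤ a (m₀ + 1) * a (m₀ + k) := by
        simpa [show m₀ + 1 + k = m₀ + k + 1 from by omega] using ih
      have hgoal : a (m₀ + k + 2) * a m₀ ≤ a (m₀ + 1) * a (m₀ + k + 1) := by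
        nlinarith [ha (m₀ + k), ha (m₀ + k + 1), ha (m₀ + k + 2), ha m₀, ha (m₀ + 1)]
      simpa [show m₀ + 1 + (k+1) = m₀ + k + 2 from by omega,
        show m₀ + (k+1) = m₀ + k + 1 from by omega] using hgoal
  have hρ : ∀ m, m₀ ≤ m → a (m+1) ≤ R * a m := by
    intro m hm
    obtain ⟨k, rfl⟩ := Nat.exists_eq_add_of_le hm
    rw [hRdef, div_mul_eq_mul_div, le_div_iff₀ (ha m₀)]
    simpa [show m₀ + 1 + k = m₀ + k + 1 from by omega] using hrat k
  set z : ℕ → ℝ := fun n => Real.sqrt (a n) * ‖x n‖ with hzdef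
  have hz0 : ∀ n, 0 ≤ z n := fun n => by positivity
  have hzrec : ∀ n, m₀ ≤ n →
      z (n+2) ≤ (K * Real.sqrt R / a (n+1)) * z (n+1) + z n := by
    intro n hn
    have haj : ∀ k, ((a k : ℝ) : ℂ) ≠ 0 := fun k => by exact_mod_cast (ha k).ne'
    have hmul : (a (n+1) : ℂ) * x (n+2)
        = (Complex.I - (b (n+1) : ℂ)) * x (n+1) - (a n : ℂ) * x n := by
      rw [hxdef, jacSol_succ_succ]
      rw [← mul_div_assoc]
      exact mul_div_cancel_left₀ _ (haj (n+1))
    have h1 : a (n+1) * ‖x (n+2)‖ ≤ K * ‖x (n+1)‖ + a n * ‖x n‖ := by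
      calc a (n+1) * ‖x (n+2)‖ = ‖(a (n+1) : ℂ) * x (n+2)‖ := by
            rw [norm_mul, Complex.norm_real, Real.norm_eq_abs, abs_of_pos (ha _)]
        _ = ‖(Complex.I - (b (n+1) : ℂ)) * x (n+1) - (a n : ℂ) * x n‖ := by rw [hmul]
        _ ≤ ‖(Complex.I - (b (n+1) : ℂ)) * x (n+1)‖ + ‖(a n : ℂ) * x n‖ := norm_sub_le _ _
        _ ≤ K * ‖x (n+1)‖ + a n * ‖x n‖ := by
            rw [norm_mul, norm_mul, Complex.norm_real, Real.norm_eq_abs, abs_of_pos (ha _)]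
            exact add_le_add (mul_le_mul_of_nonneg_right (hIb _) (norm_nonneg _)) le_rfl
    have hs2 : Real.sqrt (a (n+2)) ≤ Real.sqrt R * Real.sqrt (a (n+1)) := by
      rw [← Real.sqrt_mul hR0]
      exact Real.sqrt_le_sqrt (hρ (n+1) (by omega))
    have hlc' : a n * a (n+2) ≤ a (n+1) ^ 2 := by
      simpa using hlc (n+1) (by omega)
    have hs3 : Real.sqrt (a (n+2)) * a n ≤ a (n+1) * Real.sqrt (a n) := by
      have h4 : a (n+2) * (a n)^2 ≤ (a (n+1))^2 * a n := by
        nlinarith [ha n, ha (n+1), ha (n+2)]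
      calc Real.sqrt (a (n+2)) * a n = Real.sqrt (a (n+2) * (a n)^2) := by
            rw [Real.sqrt_mul (ha _).le, Real.sqrt_sq (ha n).le]
        _ ≤ Real.sqrt ((a (n+1))^2 * a n) := Real.sqrt_le_sqrt h4
        _ = a (n+1) * Real.sqrt (a n) := by
            rw [Real.sqrt_mul (sq_nonneg _), Real.sqrt_sq (ha _).le]
    have hmain : z (n+2) * a (n+1) ≤ K * Real.sqrt R * z (n+1) + z n * a (n+1) := by
      calc z (n+2) * a (n+1) = Real.sqrt (a (n+2)) * (a (n+1) * ‖x (n+2)‖) := by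
            rw [hzdef]; ring
        _ ≤ Real.sqrt (a (n+2)) * (K * ‖x (n+1)‖ + a n * ‖x n‖) :=
            mul_le_mul_of_nonneg_left h1 (Real.sqrt_nonneg _)
        _ = (K * ‖x (n+1)‖) * Real.sqrt (a (n+2)) + (Real.sqrt (a (n+2)) * a n) * ‖x n‖ := by
            ring
        _ ≤ (K * ‖x (n+1)‖) * (Real.sqrt R * Real.sqrt (a (n+1)))
              + (a (n+1) * Real.sqrt (a n)) * ‖x n‖ :=
            add_le_add
              (mul_le_mul_of_nonneg_left hs2
                (mul_nonneg (by linarith) (norm_nonneg _)))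
              (mul_le_mul_of_nonneg_right hs3 (norm_nonneg _))
        _ = K * Real.sqrt R * z (n+1) + z n * a (n+1) := by
            rw [hzdef]; ring
    calc z (n+2) ≤ (K * Real.sqrt R * z (n+1) + z n * a (n+1)) / a (n+1) :=
          (le_div_iff₀ (ha (n+1))).2 hmain
      _ = (K * Real.sqrt R / a (n+1)) * z (n+1) + z n := by
          rw [add_div, mul_div_cancel_right₀ _ (ha (n+1)).ne']
          ring
  set M : ℕ → ℝ := fun n => max (z n) (z (n+1)) with hMdef
  have hM0 : ∀ n, 0 ≤ M n := fun n => le_trans (hz0 n) (le_max_left _ _)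
  set ε : ℕ → ℝ := fun m => K * Real.sqrt R / a m with hεdef
  have hε0 : ∀ m, 0 ≤ ε m := by
    intro m
    rw [hεdef]
    exact div_nonneg (mul_nonneg (by linarith) (Real.sqrt_nonneg _)) (ha m).le
  have hMstep : ∀ n, m₀ ≤ n → M (n+1) ≤ (1 + ε (n+1)) * M n := by
    intro n hn
    apply max_le
    · calc z (n+1) ≤ M n := le_max_right _ _
        _ ≤ (1 + ε (n+1)) * M n :=
          le_mul_of_one_le_left (hM0 n) (by linarith [hε0 (n+1)])
    · calc z (n+2) ≤ ε (n+1) * z (n+1) + z n := hzrec n hn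
        _ ≤ ε (n+1) * M n + M n :=
          add_le_add (mul_le_mul_of_nonneg_left (le_max_right _ _) (hε0 _))
            (le_max_left _ _)
        _ = (1 + ε (n+1)) * M n := by ring
  set S := ∑' j, 1 / a j with hSdef
  set B := M m₀ * Real.exp (K * Real.sqrt R * S) with hBdef
  have hMB : ∀ n, m₀ ≤ n → M n ≤ M m₀ * Real.exp (∑ j ∈ Finset.Ioc m₀ n, ε j) := by
    intro n hn
    induction n, hn using Nat.le_induction with
    | base => simp
    | succ n hn ih =>
      have h2 : ∑ j ∈ Finset.Ioc m₀ (n+1), ε j = (∑ j ∈ Finset.Ioc m₀ n, ε j) + ε (n+1) :=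
        Finset.sum_Ioc_succ_top hn _
      calc M (n+1) ≤ (1 + ε (n+1)) * M n := hMstep n hn
        _ ≤ Real.exp (ε (n+1)) * (M m₀ * Real.exp (∑ j ∈ Finset.Ioc m₀ n, ε j)) := by
            apply mul_le_mul ?_ ih (hM0 n) (Real.exp_pos _).le
            linarith [Real.add_one_le_exp (ε (n+1))]
        _ = M m₀ * Real.exp (∑ j ∈ Finset.Ioc m₀ (n+1), ε j) := by
            rw [h2, Real.exp_add]; ring
  have hsum' : ∀ n, ∑ j ∈ Finset.Ioc m₀ n, ε j ≤ K * Real.sqrt R * S := by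
    intro n
    have h1 : ∑ j ∈ Finset.Ioc m₀ n, ε j
        = K * Real.sqrt R * ∑ j ∈ Finset.Ioc m₀ n, 1 / a j := by
      rw [Finset.mul_sum]
      refine Finset.sum_congr rfl fun j _ => ?_
      simp only [hεdef, one_mul]
      rw [div_eq_mul_one_div]
    rw [h1, hSdef]
    exact mul_le_mul_of_nonneg_left
      (Summable.sum_le_tsum _ (fun i _ => one_div_nonneg.mpr (ha i).le) hsum)
      (mul_nonneg (by linarith) (Real.sqrt_nonneg _))
  have hzB : ∀ n, m₀ ≤ n → z n ≤ B := by
    intro n hn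
    calc z n ≤ M n := le_max_left _ _
      _ ≤ M m₀ * Real.exp (∑ j ∈ Finset.Ioc m₀ n, ε j) := hMB n hn
      _ ≤ B := by
          rw [hBdef]
          exact mul_le_mul_of_nonneg_left (Real.exp_le_exp.2 (hsum' n)) (hM0 m₀)
  have hbound : ∀ n, ‖x (n + m₀)‖^2 ≤ B^2 * (1 / a (n + m₀)) := by
    intro n
    have h1 : z (n + m₀) ≤ B := hzB _ (by omega)
    have h2 : z (n + m₀) ^ 2 = a (n + m₀) * ‖x (n + m₀)‖ ^ 2 := by
      rw [hzdef]
      rw [mul_pow, Real.sq_sqrt (ha _).le]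
    have h3 : z (n + m₀)^2 ≤ B^2 := pow_le_pow_left₀ (hz0 _) h1 2
    rw [h2] at h3
    have h3' : ‖x (n + m₀)‖^2 * a (n + m₀) ≤ B^2 := by rw [mul_comm]; exact h3
    have h4 : ‖x (n + m₀)‖^2 ≤ B^2 / a (n + m₀) := (le_div_iff₀ (ha _)).2 h3'
    rwa [div_eq_mul_one_div] at h4
  have hsx : Summable (fun n => ‖x n‖^2) := by
    rw [← summable_nat_add_iff m₀]
    exact Summable.of_nonneg_of_le (fun n => by positivity) hbound
      (((summable_nat_add_iff m₀).2 hsum).mul_left (B^2))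
  apply memℓp_gen
  have h2 : ((2:ℝ≥0∞)).toReal = (2:ℝ) := by simp
  rw [h2]
  have : ∀ n, ‖x n‖ ^ (2:ℝ) = ‖x n‖^2 := fun n => by
    rw [show (2:ℝ) = ((2:ℕ):ℝ) by norm_num, Real.rpow_natCast]
  simpa [this] using hsx



lemma sum_jacobi_swap (A B y v : ℕ → ℂ) (M : ℕ) :
    ∑ j ∈ Finset.range M,
        y j * ((if j = 0 then (0:ℂ) else A (j-1) * v (j-1)) + B j * v j + A j * v (j+1))
      = (∑ j ∈ Finset.range M,
          ((if j = 0 then (0:ℂ) else A (j-1) * y (j-1)) + B j * y j + A j * y (j+1)) * v j)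
        + (if M = 0 then 0 else A (M-1) * (y (M-1) * v M - y M * v (M-1))) := by
  induction M with
  | zero => simp
  | succ n ih =>
    rw [Finset.sum_range_succ, Finset.sum_range_succ, ih]
    rcases n with _ | m
    · simp only [Finset.range_zero, Finset.sum_empty, if_pos rfl, Nat.succ_ne_zero, if_false]
      norm_num
      ring
    · simp only [Nat.succ_ne_zero, if_false, Nat.succ_sub_one]
      ring


local notation "⟪" x ", " y "⟫" => @inner ℂ H1 _ x y

/-- **Berezanskii's theorem.** Let `L` be the densely defined operator on `ℓ²(ℕ;ℂ)`
with domain the finitely supported sequences, acting as the infinite Jacobi matrix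
`(Lu)_j = a_{j-1}u_{j-1} + b_j u_j + a_j u_{j+1}` (convention `a_{-1}u_{-1} = 0`),
where `a_j > 0`, `|b_j| ≤ C`, `a_{j-1}a_{j+1} ≤ a_j²` from some index on, and
`∑ 1/a_j < ∞`.  Then `L` is not essentially self-adjoint: its closure is not
self-adjoint. -/
theorem jacobi_matrix_not_essentially_selfAdjoint
    (a b : ℕ → ℝ)
    (ha : ∀ j, 0 < a j)
    (hb : ∃ C : ℝ, ∀ j, |b j| ≤ C)
    (hlc : ∃ j₀ : ℕ, 1 ≤ j₀ ∧ ∀ j, j₀ ≤ j → a (j - 1) * a (j + 1) ≤ (a j) ^ 2)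
    (hsum : Summable (fun j => 1 / a j))
    (L : H1 →ₗ.[ℂ] H1)
    (hdom : ∀ u : H1, u ∈ L.domain ↔ {j : ℕ | u j ≠ 0}.Finite)
    (hact : ∀ u : L.domain, ∀ j : ℕ,
      (L u : H1) j =
        (if j = 0 then 0 else (a (j - 1) : ℂ) * (u : H1) (j - 1)) +
          (b j : ℂ) * (u : H1) j + (a j : ℂ) * (u : H1) (j + 1)) :
    ¬ IsSelfAdjoint L.closure := by
  intro hsa
  obtain ⟨C, hC⟩ := hb
  obtain ⟨j₀, hj₀, hlc'⟩ := hlc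
  obtain ⟨m₀, rfl⟩ : ∃ m₀, j₀ = m₀ + 1 := ⟨j₀ - 1, by omega⟩
  -- the ℓ² eigenvector
  have hxmem : Memℓp (jacSol a b) 2 := jacSol_memℓp a b ha hC hlc' hsum
  set u : H1 := ⟨jacSol a b, hxmem⟩ with hudef
  have hucoe : ∀ j, (u : ℕ → ℂ) j = jacSol a b j := fun j => rfl
  have hIu : ∀ j, ((Complex.I • u : H1) : ℕ → ℂ) j = Complex.I * jacSol a b j := by
    intro j
    rw [lp.coeFn_smul]
    simp [hucoe]
  -- the key formal adjoint identity on the original domain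
  have key : ∀ v : L.domain, ⟪u, L v⟫ = ⟪(Complex.I • u), (v : H1)⟫ := by
    intro v
    obtain hfin := (hdom v).1 v.2
    set N := hfin.toFinset.sup id + 1 with hNdef
    have hN : ∀ j, N ≤ j → (v : H1) j = 0 := by
      intro j hj
      by_contra hne
      have hjmem : j ∈ hfin.toFinset := by simpa using hne
      have h2 : j ≤ hfin.toFinset.sup id := by simpa using Finset.le_sup (f := id) hjmem
      omega
    have hLv0 : ∀ j, N + 1 ≤ j → (L v : H1) j = 0 := by
      intro j hj
      rw [hact v j]
      rw [hN (j-1) (by omega), hN j (by omega), hN (j+1) (by omega)]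
      simp
    have hinner1 : ⟪u, L v⟫ = ∑ j ∈ Finset.range (N+1),
        (starRingEnd ℂ) (jacSol a b j) * (L v : H1) j := by
      rw [lp.inner_eq_tsum]
      rw [tsum_eq_sum (L := SummationFilter.unconditional ℕ) (s := Finset.range (N+1)) ?_]
      · refine Finset.sum_congr rfl fun j _ => ?_
        rw [RCLike.inner_apply]
        exact mul_comm _ _
      intro j hj
      rw [hLv0 j (by simpa using hj)]
      simp
    have hinner2 : ⟪(Complex.I • u), (v : H1)⟫ = ∑ j ∈ Finset.range (N+1),
        (starRingEnd ℂ) (Complex.I * jacSol a b j) * (v : H1) j := by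
      rw [lp.inner_eq_tsum]
      have e1 := tsum_eq_sum (L := SummationFilter.unconditional ℕ) (s := Finset.range (N+1))
        (f := fun j => (inner ℂ ((Complex.I • u : H1) j) ((v : H1) j) : ℂ))
        (fun j hj => by
          show (inner ℂ ((Complex.I • u : H1) j) ((v : H1) j) : ℂ) = 0
          rw [hN j (by simp only [Finset.mem_range, not_lt] at hj; omega)]
          simp)
      rw [e1]
      refine Finset.sum_congr rfl fun j _ => ?_
      show (inner ℂ ((Complex.I • u : H1) j) ((v : H1) j) : ℂ) = _
      rw [RCLike.inner_apply, hIu j]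
      exact mul_comm _ _
    rw [hinner1, hinner2]
    have hswap := sum_jacobi_swap (fun j => (a j : ℂ)) (fun j => (b j : ℂ))
      (fun j => (starRingEnd ℂ) (jacSol a b j)) (fun j => (v : H1) j) (N+1)
    have hbd : (if N + 1 = 0 then (0:ℂ) else (a (N+1-1) : ℂ) *
        ((starRingEnd ℂ) (jacSol a b (N+1-1)) * (v : H1) (N+1) -
          (starRingEnd ℂ) (jacSol a b (N+1)) * (v : H1) (N+1-1))) = 0 := by
      rw [if_neg (Nat.succ_ne_zero N)]
      rw [hN (N+1) (by omega)]
      rw [show N + 1 - 1 = N from rfl, hN N le_rfl]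
      ring
    calc ∑ j ∈ Finset.range (N+1), (starRingEnd ℂ) (jacSol a b j) * (L v : H1) j
        = ∑ j ∈ Finset.range (N+1), (starRingEnd ℂ) (jacSol a b j) *
            ((if j = 0 then (0:ℂ) else (a (j-1) : ℂ) * (v : H1) (j-1))
              + (b j : ℂ) * (v : H1) j + (a j : ℂ) * (v : H1) (j+1)) := by
          refine Finset.sum_congr rfl fun j _ => ?_
          rw [hact v j]
      _ = ∑ j ∈ Finset.range (N+1),
            ((if j = 0 then (0:ℂ) else (a (j-1) : ℂ) * (starRingEnd ℂ) (jacSol a b (j-1)))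
              + (b j : ℂ) * (starRingEnd ℂ) (jacSol a b j)
              + (a j : ℂ) * (starRingEnd ℂ) (jacSol a b (j+1))) * (v : H1) j := by
          rw [hswap, hbd, add_zero]
      _ = ∑ j ∈ Finset.range (N+1),
            (starRingEnd ℂ) (Complex.I * jacSol a b j) * (v : H1) j := by
          refine Finset.sum_congr rfl fun j _ => ?_
          have h := congrArg (starRingEnd ℂ) (jacSol_eigen a b ha j)
          rw [← h]
          simp only [map_add, map_mul, map_zero, apply_ite (starRingEnd ℂ),
            Complex.conj_ofReal]
  -- closure graph argument
  set T := L.closure with hTdef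
  have hdense : Dense (T.domain : Set H1) := hsa.dense_domain
  have hgraph : (T.graph : Set (H1 × H1)) ⊆ closure (L.graph : Set (H1 × H1)) := by
    by_cases hc : L.IsClosable
    · rw [hTdef, ← hc.graph_closure_eq_closure_graph, Submodule.topologicalClosure_coe]
    · rw [hTdef, LinearPMap.closure_def' hc]
      exact subset_closure
  have hx₀ : ∀ w : T.domain, ⟪(Complex.I • u), (w : H1)⟫ = ⟪u, T w⟫ := by
    intro w
    have hcont : Continuous (fun p : H1 × H1 => (⟪u, p.2⟫ - ⟪(Complex.I • u), p.1⟫ : ℂ)) :=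
      (Continuous.inner continuous_const continuous_snd).sub
        (Continuous.inner continuous_const continuous_fst)
    have hclosed : IsClosed {p : H1 × H1 | (⟪u, p.2⟫ - ⟪(Complex.I • u), p.1⟫ : ℂ) = 0} :=
      isClosed_eq hcont continuous_const
    have hsub : closure (L.graph : Set (H1 × H1)) ⊆
        {p : H1 × H1 | (⟪u, p.2⟫ - ⟪(Complex.I • u), p.1⟫ : ℂ) = 0} := by
      apply closure_minimal ?_ hclosed
      rintro p hp
      obtain ⟨y, hy1, hy2⟩ := (L.mem_graph_iff).1 hp
      simp only [Set.mem_setOf_eq, ← hy1, ← hy2]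
      rw [key y]
      ring
    have hmem : ((w : H1), T w) ∈ closure (L.graph : Set (H1 × H1)) :=
      hgraph (T.mem_graph w)
    have := hsub hmem
    simp only [Set.mem_setOf_eq] at this
    linear_combination -this
  have huadj : u ∈ T.adjoint.domain :=
    T.mem_adjoint_domain_of_exists u ⟨Complex.I • u, fun w => hx₀ w⟩
  have hTadj : T.adjoint ⟨u, huadj⟩ = Complex.I • u :=
    LinearPMap.adjoint_apply_eq hdense ⟨u, huadj⟩ fun w => hx₀ w
  have hsa' : T.adjoint = T := hsa
  have hudom : u ∈ T.domain := hsa' ▸ huadj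
  have hle : T.adjoint ≤ T := le_of_eq hsa'
  have hvals : T ⟨u, hudom⟩ = Complex.I • u := by
    rw [← hTadj]
    exact (hle.2 rfl).symm
  have hform := LinearPMap.adjoint_isFormalAdjoint hdense
  have h1 : ⟪T.adjoint ⟨u, huadj⟩, ((⟨u, hudom⟩ : T.domain) : H1)⟫
      = ⟪u, T ⟨u, hudom⟩⟫ := hform ⟨u, huadj⟩ ⟨u, hudom⟩
  rw [hTadj, hvals] at h1
  simp only [inner_smul_left, inner_smul_right, Complex.conj_I] at h1
  have hzero : ⟪u, u⟫ = 0 := by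
    have h2 : (2 * Complex.I) * ⟪u, u⟫ = 0 := by linear_combination -h1
    rcases mul_eq_zero.1 h2 with h | h
    · exact absurd h (by simp [Complex.I_ne_zero])
    · exact h
  have hu0 : u = 0 := inner_self_eq_zero.1 hzero
  have : jacSol a b 0 = 0 := by
    rw [← hucoe 0, hu0]
    rfl
  rw [jacSol_zero] at this
  exact one_ne_zero this
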